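/- Let R > 0 and p ∈ (0, 1/2]. Let σ, σ̄ : ℕ → ℝ be sequences with σ_i ≥ 0, σ̄_i ≥ 0 for all i and σ_0 + σ̄_0 > 0, and let P : ℕ → ℝ satisfy p ≤ P_i ≤ 1 − p for all i. Define S_m = ∑_{i<m} ( σ_i/√(R/2 + (m−1)·P_i·R) + σ̄_i/√(R/2 + (m−1)·(1−P_i)·R) ) and U_m = ∑_{i<m} ( σ_i/√(m·P_i·R) + σ̄_i/√(m·(1−P_i)·R) ). Then S_m / U_m tends to 1 as m → ∞; i.e., the stratified a-posteriori average DP error is asymptotically equivalent to the uniform a-posteriori average DP error. -/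

import Mathlib

open Filter

lemma sqrt_term_bounds (R p : ℝ) (hR : 0 < R) (hp : 0 < p)
    (s Q : ℝ) (hs : 0 ≤ s) (hQ1 : p ≤ Q) (hQ2 : Q ≤ 1)
    (m : ℕ) (hm : 1 ≤ m) (ht : 1/(2*p) / (m:ℝ) < 1) :
    s / Real.sqrt ((m:ℝ)*Q*R) * (Real.sqrt (1 + 1/(2*p)/(m:ℝ)))⁻¹
      ≤ s / Real.sqrt (R/2 + ((m:ℝ)-1)*Q*R)
    ∧ s / Real.sqrt (R/2 + ((m:ℝ)-1)*Q*R)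
      ≤ s / Real.sqrt ((m:ℝ)*Q*R) * (Real.sqrt (1 - 1/(2*p)/(m:ℝ)))⁻¹ := by
  have hm1 : (1:ℝ) ≤ (m:ℝ) := by exact_mod_cast hm
  have hm0 : (0:ℝ) < (m:ℝ) := by linarith
  set t := 1/(2*p) / (m:ℝ) with htdef
  have ht0 : 0 < t := by positivity
  have hQ0 : 0 < Q := lt_of_lt_of_le hp hQ1
  set B := (m:ℝ)*Q*R with hBdef
  have hB : 0 < B := by positivity
  have hBt : R/2 ≤ B*t := by
    have hBt' : B*t = Q*R/(2*p) := by
      rw [hBdef, htdef]; field_simp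
    rw [hBt']
    rw [div_le_div_iff₀ (by norm_num) (by positivity)]
    nlinarith
  set A := R/2 + ((m:ℝ)-1)*Q*R with hAdef
  have hAB : A = B + R*(1/2 - Q) := by rw [hAdef, hBdef]; ring
  have hAub : A ≤ B*(1+t) := by
    rw [hAB]; nlinarith [mul_nonneg hR.le hQ0.le]
  have hAlb : B*(1-t) ≤ A := by
    rw [hAB]; nlinarith [mul_nonneg hR.le (sub_nonneg.mpr hQ2)]
  have h1t : 0 < 1 - t := by linarith
  have hA : 0 < A := lt_of_lt_of_le (by positivity : (0:ℝ) < B*(1-t)) hAlb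
  have hsplit : ∀ x : ℝ, 0 < x → s / Real.sqrt (B*x) = s / Real.sqrt B * (Real.sqrt x)⁻¹ := by
    intro x hx
    rw [Real.sqrt_mul hB.le, div_mul_eq_div_div, div_eq_mul_inv]
  constructor
  · rw [← hsplit (1+t) (by linarith)]
    exact div_le_div_of_nonneg_left hs (Real.sqrt_pos.mpr hA) (Real.sqrt_le_sqrt hAub)
  · rw [← hsplit (1-t) h1t]
    exact div_le_div_of_nonneg_left hs (Real.sqrt_pos.mpr (by positivity)) (Real.sqrt_le_sqrt hAlb)

/-- The stratified a-posteriori average DP error is asymptotically equivalent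
to the uniform a-posteriori average DP error as the number of agents grows. -/
theorem stratified_aposteriori_asympt_uniform
    (R : ℝ) (hR : 0 < R) (p : ℝ) (hp : 0 < p) (hp' : p ≤ 1 / 2)
    (σ σ' P : ℕ → ℝ)
    (hσ : ∀ i, 0 ≤ σ i) (hσ' : ∀ i, 0 ≤ σ' i)
    (h0 : 0 < σ 0 + σ' 0)
    (hP : ∀ i, p ≤ P i ∧ P i ≤ 1 - p) :
    Filter.Tendsto
      (fun m : ℕ =>
        (∑ i ∈ Finset.range m,
            (σ i / Real.sqrt (R / 2 + ((m : ℝ) - 1) * P i * R)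
              + σ' i / Real.sqrt (R / 2 + ((m : ℝ) - 1) * (1 - P i) * R)))
        / (∑ i ∈ Finset.range m,
            (σ i / Real.sqrt ((m : ℝ) * P i * R)
              + σ' i / Real.sqrt ((m : ℝ) * (1 - P i) * R))))
      Filter.atTop (nhds 1) := by
  have hc : (0:ℝ) < 1/(2*p) := by positivity
  -- limits of the two bounding sequences
  have hdiv : Tendsto (fun m : ℕ => 1/(2*p) / (m:ℝ)) atTop (nhds 0) :=
    tendsto_const_div_atTop_nhds_zero_nat _
  have hgplus : Tendsto (fun m : ℕ => (Real.sqrt (1 + 1/(2*p)/(m:ℝ)))⁻¹) atTop (nhds 1) := by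
    have h1 : Tendsto (fun m : ℕ => 1 + 1/(2*p)/(m:ℝ)) atTop (nhds 1) := by
      simpa using tendsto_const_nhds.add hdiv
    have := (h1.sqrt).inv₀ (by rw [Real.sqrt_one]; norm_num)
    simpa [Real.sqrt_one] using this
  have hgminus : Tendsto (fun m : ℕ => (Real.sqrt (1 - 1/(2*p)/(m:ℝ)))⁻¹) atTop (nhds 1) := by
    have h1 : Tendsto (fun m : ℕ => 1 - 1/(2*p)/(m:ℝ)) atTop (nhds 1) := by
      simpa using tendsto_const_nhds.sub hdiv
    have := (h1.sqrt).inv₀ (by rw [Real.sqrt_one]; norm_num)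
    simpa [Real.sqrt_one] using this
  have hev : ∀ᶠ m : ℕ in atTop, 1/(2*p) / (m:ℝ) < 1 := by
    have : Set.Iio (1:ℝ) ∈ nhds (0:ℝ) := Iio_mem_nhds one_pos
    exact hdiv.eventually this
  have hUpos : ∀ m : ℕ, 1 ≤ m → 0 < ∑ i ∈ Finset.range m,
      (σ i / Real.sqrt ((m:ℝ) * P i * R) + σ' i / Real.sqrt ((m:ℝ) * (1 - P i) * R)) := by
    intro m hm
    have hm0 : (0:ℝ) < (m:ℝ) := by exact_mod_cast hm
    apply Finset.sum_pos'
    · intro i _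
      exact add_nonneg (div_nonneg (hσ i) (Real.sqrt_nonneg _))
        (div_nonneg (hσ' i) (Real.sqrt_nonneg _))
    · refine ⟨0, Finset.mem_range.mpr hm, ?_⟩
      have h1 : 0 < P 0 := lt_of_lt_of_le hp (hP 0).1
      have h2 : 0 < 1 - P 0 := lt_of_lt_of_le hp (by linarith [(hP 0).2])
      have hs1 : 0 < Real.sqrt ((m:ℝ) * P 0 * R) := Real.sqrt_pos.mpr (by positivity)
      have hs2 : 0 < Real.sqrt ((m:ℝ) * (1 - P 0) * R) := Real.sqrt_pos.mpr (by positivity)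
      rcases lt_or_ge 0 (σ 0) with h | h
      · have h3 : 0 < σ 0 / Real.sqrt ((m:ℝ) * P 0 * R) := div_pos h hs1
        have h4 : 0 ≤ σ' 0 / Real.sqrt ((m:ℝ) * (1 - P 0) * R) :=
          div_nonneg (hσ' 0) hs2.le
        linarith
      · have hσ0 : 0 < σ' 0 := by nlinarith [hσ 0]
        have h3 : 0 < σ' 0 / Real.sqrt ((m:ℝ) * (1 - P 0) * R) := div_pos hσ0 hs2
        have h4 : 0 ≤ σ 0 / Real.sqrt ((m:ℝ) * P 0 * R) := div_nonneg (hσ 0) hs1.le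
        linarith
  refine tendsto_of_tendsto_of_tendsto_of_le_of_le' hgplus hgminus ?_ ?_
  · filter_upwards [eventually_ge_atTop 1, hev] with m hm hlt
    -- lower bound
    have hU := hUpos m hm
    rw [le_div_iff₀ hU]
    rw [mul_comm, Finset.sum_mul]
    apply Finset.sum_le_sum
    intro i _
    have h1 := (sqrt_term_bounds R p hR hp (σ i) (P i) (hσ i) (hP i).1
      (by linarith [(hP i).2]) m hm hlt).1
    have h2 := (sqrt_term_bounds R p hR hp (σ' i) (1 - P i) (hσ' i)
      (by linarith [(hP i).2]) (by linarith [(hP i).1]) m hm hlt).1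
    calc (σ i / Real.sqrt ((m:ℝ) * P i * R) + σ' i / Real.sqrt ((m:ℝ) * (1 - P i) * R))
          * (Real.sqrt (1 + 1/(2*p)/(m:ℝ)))⁻¹
        = σ i / Real.sqrt ((m:ℝ) * P i * R) * (Real.sqrt (1 + 1/(2*p)/(m:ℝ)))⁻¹
          + σ' i / Real.sqrt ((m:ℝ) * (1 - P i) * R) * (Real.sqrt (1 + 1/(2*p)/(m:ℝ)))⁻¹ := by
          ring
      _ ≤ _ := add_le_add h1 h2
  · filter_upwards [eventually_ge_atTop 1, hev] with m hm hlt
    have hU := hUpos m hm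
    rw [div_le_iff₀ hU]
    rw [mul_comm, Finset.sum_mul]
    apply Finset.sum_le_sum
    intro i _
    have h1 := (sqrt_term_bounds R p hR hp (σ i) (P i) (hσ i) (hP i).1
      (by linarith [(hP i).2]) m hm hlt).2
    have h2 := (sqrt_term_bounds R p hR hp (σ' i) (1 - P i) (hσ' i)
      (by linarith [(hP i).2]) (by linarith [(hP i).1]) m hm hlt).2
    calc σ i / Real.sqrt (R / 2 + ((m:ℝ) - 1) * P i * R)
          + σ' i / Real.sqrt (R / 2 + ((m:ℝ) - 1) * (1 - P i) * R)
        ≤ σ i / Real.sqrt ((m:ℝ) * P i * R) * (Real.sqrt (1 - 1/(2*p)/(m:ℝ)))⁻¹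
          + σ' i / Real.sqrt ((m:ℝ) * (1 - P i) * R) * (Real.sqrt (1 - 1/(2*p)/(m:ℝ)))⁻¹ :=
          add_le_add h1 h2
      _ = (σ i / Real.sqrt ((m:ℝ) * P i * R) + σ' i / Real.sqrt ((m:ℝ) * (1 - P i) * R))
          * (Real.sqrt (1 - 1/(2*p)/(m:ℝ)))⁻¹ := by ring
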